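/- A semilocal left cu-uniserial ring is local: if R is a ring such that R/J(R) is semisimple and R is cu-uniserial as a left module over itself, then R has a unique maximal left ideal. -/

import Mathlib

/-- The radical of a module: intersection of all maximal submodules. -/
def ModRadical (R M : Type*) [Ring R] [AddCommGroup M] [Module R M] : Submodule R M :=
  sInf {N : Submodule R M | IsCoatom N}

/-- A module is cyclic if it is generated by one element. -/
def IsCyclicMod (R M : Type*) [Ring R] [AddCommGroup M] [Module R M] : Prop :=
  ∃ x : M, Submodule.span R {x} = ⊤

/-- A module is uniform if it is nonzero and any two nonzero submodules intersect nontrivially. -/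
def IsUniformMod (R M : Type*) [Ring R] [AddCommGroup M] [Module R M] : Prop :=
  Nontrivial M ∧ ∀ A B : Submodule R M, A ≠ ⊥ → B ≠ ⊥ → A ⊓ B ≠ ⊥

/-- A module is cyclic-uniform uniserial (cu-uniserial) if it is nonzero and for every
nonzero finitely generated submodule `K`, the quotient `K / Rad K` is cyclic and uniform. -/
def IsCUUniserial (R M : Type*) [Ring R] [AddCommGroup M] [Module R M] : Prop :=
  Nontrivial M ∧ ∀ K : Submodule R M, K ≠ ⊥ → K.FG →
    IsCyclicMod R (↥K ⧸ ModRadical R ↥K) ∧ IsUniformMod R (↥K ⧸ ModRadical R ↥K)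

/-- Uniformity transfers across linear equivalences. -/
lemma IsUniformMod.congr {R M N : Type*} [Ring R] [AddCommGroup M] [Module R M]
    [AddCommGroup N] [Module R N] (e : M ≃ₗ[R] N) (h : IsUniformMod R M) :
    IsUniformMod R N := by
  obtain ⟨hnt, hint⟩ := h
  have : Nontrivial N := e.symm.toEquiv.nontrivial
  refine ⟨this, fun A B hA hB => ?_⟩
  let f : Submodule R M ≃o Submodule R N := Submodule.orderIsoMapComap e
  have hA' : f.symm A ≠ ⊥ := by
    intro hbot
    apply hA
    have := congrArg f hbot
    rwa [f.apply_symm_apply, f.map_bot] at this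
  have hB' : f.symm B ≠ ⊥ := by
    intro hbot
    apply hB
    have := congrArg f hbot
    rwa [f.apply_symm_apply, f.map_bot] at this
  have := hint _ _ hA' hB'
  intro hbot
  apply this
  have : f.symm (A ⊓ B) = ⊥ := by rw [hbot, f.symm.map_bot]
  rwa [f.symm.map_inf] at this

/-- A semisimple uniform module is simple. -/
lemma simple_of_ss_uniform {R M : Type*} [Ring R] [AddCommGroup M] [Module R M]
    [IsSemisimpleModule R M] (h : IsUniformMod R M) : IsSimpleModule R M := by
  obtain ⟨hnt, hint⟩ := h
  haveI := hnt
  obtain ⟨x, hx⟩ := exists_ne (0 : M)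
  haveI : Nontrivial (Submodule R M) := ⟨⊥, ⊤, fun hbt =>
    hx ((Submodule.mem_bot R).mp (hbt ▸ Submodule.mem_top))⟩
  rw [isSimpleModule_iff]
  refine ⟨?_⟩
  intro N
  obtain ⟨N', hN'⟩ := exists_isCompl N
  rcases eq_or_ne N ⊥ with hN | hN
  · exact Or.inl hN
  rcases eq_or_ne N' ⊥ with hN'b | hN'b
  · right
    have := hN'.sup_eq_top
    rwa [hN'b, sup_bot_eq] at this
  · exact absurd hN'.inf_eq_bot (hint N N' hN hN'b)

theorem stmt10 {R : Type*} [Ring R]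
    [IsSemisimpleModule R (R ⧸ Ideal.jacobson (⊥ : Ideal R))]
    (h : IsCUUniserial R R) :
    ∃! I : Ideal R, IsCoatom I := by
  obtain ⟨hnt, hK⟩ := h
  have htop : (⊤ : Submodule R R) ≠ ⊥ := fun hb => by
    have : (1 : R) ∈ (⊥ : Submodule R R) := hb ▸ Submodule.mem_top
    exact one_ne_zero (Submodule.mem_bot R |>.mp this)
  have hfg : (⊤ : Submodule R R).FG := Module.Finite.fg_top
  obtain ⟨-, hu⟩ := hK ⊤ htop hfg
  -- transfer to R ⧸ jacobson ⊥
  set J : Ideal R := Ideal.jacobson (⊥ : Ideal R) with hJdef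
  let f : Submodule R (↥(⊤ : Submodule R R)) ≃o Submodule R R :=
    Submodule.orderIsoMapComap (Submodule.topEquiv)
  have hmap : Submodule.map (Submodule.topEquiv : ↥(⊤ : Submodule R R) ≃ₗ[R] R).toLinearMap
      (ModRadical R ↥(⊤ : Submodule R R)) = J := by
    have h1 : Submodule.map (Submodule.topEquiv : ↥(⊤ : Submodule R R) ≃ₗ[R] R).toLinearMap
        (ModRadical R ↥(⊤ : Submodule R R)) = f (sInf {N | IsCoatom N}) := rfl
    rw [h1, OrderIso.map_sInf, ← sInf_image]
    have h2 : f '' {N | IsCoatom N} = {I : Ideal R | IsCoatom I} := by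
      ext I
      constructor
      · rintro ⟨N, hN, rfl⟩
        exact (OrderIso.isCoatom_iff f N).mpr hN
      · intro hI
        exact ⟨f.symm I, by
          have := (OrderIso.isCoatom_iff f (f.symm I))
          rw [f.apply_symm_apply] at this
          exact this.mp hI, f.apply_symm_apply I⟩
    rw [h2, hJdef, Ideal.jacobson]
    congr 1
    ext I
    simp only [Set.mem_setOf_eq, bot_le, true_and]
    exact ⟨fun hc => ⟨hc⟩, fun hm => hm.out⟩
  let e : (↥(⊤ : Submodule R R) ⧸ ModRadical R ↥(⊤ : Submodule R R)) ≃ₗ[R] (R ⧸ J) :=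
    Submodule.Quotient.equiv _ J Submodule.topEquiv hmap
  have hunif : IsUniformMod R (R ⧸ J) := IsUniformMod.congr e hu
  have hsimple : IsSimpleModule R (R ⧸ J) := simple_of_ss_uniform hunif
  have hJcoatom : IsCoatom J := (isSimpleModule_iff_isCoatom).mp hsimple
  refine ⟨J, hJcoatom, fun I hI => ?_⟩
  have hle : J ≤ I := sInf_le (by
    simp only [hJdef, Ideal.jacobson, Set.mem_setOf_eq, bot_le, true_and]
    exact ⟨hI⟩)
  rcases hle.lt_or_eq with hlt | heq
  · exact absurd (hJcoatom.2 I hlt) hI.1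
  · exact heq.symm
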